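/- arXiv:2411.13964 — 3 statements merged into one kernel-verified Lean document; each statement's English description precedes it below -/
import Mathlib

section
/- Let σ¹,σ² be two independent instantaneous-tumble (resp. finite-tumble) velocity processes and N₁^L,N₂^L two independent rate-γ_L Poisson clocks independent of σ¹,σ². Let y^L and ỹ^L be two discrete processes with L sites, both driven by the same velocities σ¹,σ² and the same clocks N₁^L,N₂^L, but with possibly different initial states in {1,…,L}. Denote 0=Θ^{L,i}_0<Θ^{L,i}_1<⋯ the jump times of N_i^L and S^L(t) = Σ_{i=1,2} Σ_{k≥1} 1{Θ^{L,i}_k ≤ t}·(−1)^i·σ^i(Θ^{L,i}_k). Then, for any fixed realization and any T>0: |S^L(T)| ≥ L−1 implies inf{ t ≥ 0 : y^L(t) = ỹ^L(t) } ≤ T. -/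
open Filter

/-- Velocity values of the instantaneous-tumble process. -/
def V2 : Finset ℤ := {-1, 1}

/-- Velocity values of the finite-tumble process. -/
def V3 : Finset ℤ := {-1, 0, 1}

/-- Generator of the instantaneous-tumble velocity process (rate `w` flips) on `V2`. -/
noncomputable def genITP (w : ℝ) : ℤ → ℤ → ℝ := fun a b => if a = b then -w else w

/-- Generator of the finite-tumble velocity process on `V3`:
`1 → 0` and `-1 → 0` at rate `α`, `0 → 1` and `0 → -1` at rate `β/2`. -/
noncomputable def genFTP (a b : ℝ) : ℤ → ℤ → ℝ := fun c d =>
  if c = d then (if c = 0 then -b else -a)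
  else if c = 0 then b / 2
  else if d = 0 then a
  else 0

/-- Generator of a pair of independent Markov jump processes, each with generator `Q`. -/
noncomputable def pairGen {A : Type*} [DecidableEq A] (Q : A → A → ℝ) : A × A → A × A → ℝ :=
  fun z z' => (if z.2 = z'.2 then Q z.1 z'.1 else 0) + (if z.1 = z'.1 then Q z.2 z'.2 else 0)

/-- `p` is the transition function of the Markov jump process with generator `Q` on the finite
state space `S` : it solves Kolmogorov's forward equation with the identity as initial
condition.  (Equivalently, `p t = exp (t Q)` on `S`.) -/
def IsTransitionOf {A : Type*} [DecidableEq A] (S : Finset A) (Q : A → A → ℝ)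
    (p : ℝ → A → A → ℝ) : Prop :=
  (∀ a b, p 0 a b = if a = b then 1 else 0) ∧
  (∀ t a b, HasDerivAt (fun u => p u a b) (∑ c ∈ S, p t a c * Q c b) t)

/-- The process `Z` starting at `z₀` takes values in `S` and has the finite-dimensional
distributions of the Markov jump process with transition function `p`. -/
def HasLawMJP {Ω : Type*} [MeasurableSpace Ω] {A : Type*} [MeasurableSpace A]
    (P : MeasureTheory.Measure Ω) (S : Finset A) (p : ℝ → A → A → ℝ)
    (Z : ℝ → Ω → A) (z₀ : A) : Prop :=
  (∀ t, Measurable (Z t)) ∧ (∀ ω, Z 0 ω = z₀) ∧ (∀ t ω, Z t ω ∈ S) ∧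
  ∀ (n : ℕ) (t : ℕ → ℝ) (s : ℕ → A), (∀ i, 0 ≤ t i) → (∀ i, i < n → t i < t (i + 1)) →
    (P {ω | ∀ i ≤ n, Z (t i) ω = s i}).toReal =
      p (t 0) z₀ (s 0) * ∏ i ∈ Finset.range n, p (t (i + 1) - t i) (s i) (s (i + 1))

/-- `f` is a right-continuous step function on every bounded interval. -/
def PiecewiseConst {A : Type*} (f : ℝ → A) : Prop :=
  ∀ T : ℝ, 0 < T → ∃ (n : ℕ) (u : ℕ → ℝ), u 0 = 0 ∧ u n = T ∧ (∀ i, i < n → u i < u (i + 1)) ∧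
    ∀ i, i < n → ∀ s ∈ Set.Ico (u i) (u (i + 1)), f s = f (u i)

/-- Clipping to the interval `[0, ℓ]`. -/
noncomputable def clip (ℓ x : ℝ) : ℝ := max 0 (min ℓ x)

/-- Pathwise description of the inter-particle distance of the continuous process: on every
interval on which the velocities are constant, `x` follows the clipped linear motion with
velocity `σ² - σ¹`. -/
def IsClippedFlow (ℓ : ℝ) (σ : ℝ → ℤ × ℤ) (x₀ : ℝ) (x : ℝ → ℝ) : Prop :=
  x 0 = x₀ ∧
  ∀ s t : ℝ, 0 ≤ s → s ≤ t → (∀ u ∈ Set.Ico s t, σ u = σ s) →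
    x t = clip ℓ (x s + (((σ s).2 : ℝ) - ((σ s).1 : ℝ)) * (t - s))

/-- A continuous run-and-tumble model (the CITP for `S = V2`, `Q = genITP ω`; the CFTP for
`S = V3`, `Q = genFTP α β`) : for every initial condition, the velocity pair `Z` and the
inter-particle distance `x` are realized on a common probability space, together with the
associated Markov transition kernels `K t`. -/
structure RTPSystem (S : Finset ℤ) (Q : ℤ → ℤ → ℝ) (ℓ : ℝ) where
  Ω : Type
  [mΩ : MeasurableSpace Ω]
  P : MeasureTheory.Measure Ω
  prob : MeasureTheory.IsProbabilityMeasure P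
  p : ℝ → ℤ × ℤ → ℤ × ℤ → ℝ
  htrans : IsTransitionOf (S ×ˢ S) (pairGen Q) p
  x : ℝ × (ℤ × ℤ) → ℝ → Ω → ℝ
  Z : ℝ × (ℤ × ℤ) → ℝ → Ω → ℤ × ℤ
  hZ : ∀ z : ℝ × (ℤ × ℤ), z.1 ∈ Set.Icc 0 ℓ → z.2 ∈ S ×ˢ S →
    HasLawMJP P (S ×ˢ S) p (Z z) z.2 ∧ ∀ ω, PiecewiseConst fun t => Z z t ω
  hx : ∀ z : ℝ × (ℤ × ℤ), z.1 ∈ Set.Icc 0 ℓ → z.2 ∈ S ×ˢ S →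
    (∀ t, Measurable (x z t)) ∧ ∀ ω, IsClippedFlow ℓ (fun t => Z z t ω) z.1 fun t => x z t ω
  K : ℝ → ProbabilityTheory.Kernel (ℝ × ℤ × ℤ) (ℝ × ℤ × ℤ)
  hK : ∀ t, ProbabilityTheory.IsMarkovKernel (K t)
  hKlaw : ∀ t, 0 ≤ t → ∀ z : ℝ × (ℤ × ℤ), z.1 ∈ Set.Icc 0 ℓ → z.2 ∈ S ×ˢ S →
    K t z = P.map fun ω => (x z t ω, Z z t ω)

attribute [instance] RTPSystem.mΩ

/-- The physical state space `[0, ℓ] × (S × S)`. -/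
def validSet (S : Finset ℤ) (ℓ : ℝ) : Set (ℝ × ℤ × ℤ) :=
  (Set.Icc 0 ℓ) ×ˢ {q : ℤ × ℤ | q.1 ∈ S ∧ q.2 ∈ S}

/-- Total variation distance between two measures. -/
noncomputable def tvDist {A : Type*} [MeasurableSpace A] (μ ν : MeasureTheory.Measure A) : ℝ :=
  ⨆ B : {B : Set A // MeasurableSet B}, |(μ B.1).toReal - (ν B.1).toReal|

/-- `π` is an invariant probability measure of the system. -/
def IsInvariantMeasure {S : Finset ℤ} {Q : ℤ → ℤ → ℝ} {ℓ : ℝ} (sys : RTPSystem S Q ℓ)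
    (π : MeasureTheory.Measure (ℝ × ℤ × ℤ)) : Prop :=
  MeasureTheory.IsProbabilityMeasure π ∧ π (validSet S ℓ) = 1 ∧
    ∀ t, 0 ≤ t → π.bind (fun z => sys.K t z) = π

/-- The mixing time `t_mix(ε) = inf {t ≥ 0 : sup_μ ‖μ P_t - π‖_TV ≤ ε}` of the system. -/
noncomputable def mixTime {S : Finset ℤ} {Q : ℤ → ℤ → ℝ} {ℓ : ℝ} (sys : RTPSystem S Q ℓ)
    (π : MeasureTheory.Measure (ℝ × ℤ × ℤ)) (ε : ℝ) : ℝ :=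
  sInf {t : ℝ | 0 ≤ t ∧ ∀ μ : MeasureTheory.Measure (ℝ × ℤ × ℤ),
    MeasureTheory.IsProbabilityMeasure μ → μ (validSet S ℓ) = 1 →
      tvDist (μ.bind fun z => sys.K t z) π ≤ ε}

/-- Index type used to express joint independence of the two Poisson clocks and the velocity
process: `none` labels the velocity path, `some (i, k)` labels the `k`-th inter-ring waiting
time of clock `i`. -/
def clockIdxType : Option (Fin 2 × ℕ) → Type := fun j => match j with
  | none => ℝ → ℤ × ℤ
  | some _ => ℝ

instance (j : Option (Fin 2 × ℕ)) : MeasurableSpace (clockIdxType j) :=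
  match j with
  | none => inferInstanceAs (MeasurableSpace (ℝ → ℤ × ℤ))
  | some _ => inferInstanceAs (MeasurableSpace ℝ)

/-- The family consisting of the velocity path and all waiting times of the two clocks. -/
def clockFam {Ω : Type*} (Θ : Fin 2 → ℕ → Ω → ℝ) (W : Ω → ℝ → ℤ × ℤ) :
    (j : Option (Fin 2 × ℕ)) → Ω → clockIdxType j := fun j => match j with
  | none => W
  | some ik => fun ω => Θ ik.1 (ik.2 + 1) ω - Θ ik.1 ik.2 ω

/-- `Θ 0` and `Θ 1` are the jump times of two independent rate-`γ` Poisson processes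
(partial sums of i.i.d. exponential waiting times), independent of the process with paths
`W`. -/
def IsPoissonClocksIndepOf {Ω : Type*} [MeasurableSpace Ω] (P : MeasureTheory.Measure Ω)
    (γ : ℝ) (Θ : Fin 2 → ℕ → Ω → ℝ) (W : Ω → ℝ → ℤ × ℤ) : Prop :=
  (∀ i ω, Θ i 0 ω = 0) ∧ (∀ i k, Measurable (Θ i k)) ∧
  (∀ ω i, StrictMono fun k => Θ i k ω) ∧
  (∀ ω i, Tendsto (fun k => Θ i k ω) atTop atTop) ∧
  ProbabilityTheory.iIndepFun (clockFam Θ W) P ∧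
  ∀ i k, P.map (fun ω => Θ i (k + 1) ω - Θ i k ω) = ProbabilityTheory.expMeasure γ

/-- The compensated-jump sum `S^L(t) = Σ_{i=1,2} Σ_{k≥1} 1_{Θ^i_k ≤ t} (-1)^i σ^i(Θ^i_k)`
(clock `Θ 0` carries `-σ¹`, clock `Θ 1` carries `+σ²`). -/
noncomputable def clockSum (Θ : Fin 2 → ℕ → ℝ) (σ : ℝ → ℤ × ℤ) (t : ℝ) : ℝ :=
  (∑' k : ℕ, if Θ 1 (k + 1) ≤ t then ((σ (Θ 1 (k + 1))).2 : ℝ) else 0) -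
  (∑' k : ℕ, if Θ 0 (k + 1) ≤ t then ((σ (Θ 0 (k + 1))).1 : ℝ) else 0)

/-- Pathwise description of the discrete process on `{1, …, L}` driven by the velocity path
`σ` and the ring times `Θ₁, Θ₂`: `y` is constant between rings and, at a ring of clock 1
(resp. clock 2), jumps to `max(1, min(L, y - σ¹))` (resp. `max(1, min(L, y + σ²))`),
evaluated at the left limit. -/
def IsDiscreteRTP (L : ℕ) (Θ₁ Θ₂ : ℕ → ℝ) (σ : ℝ → ℤ × ℤ) (y : ℝ → ℤ) : Prop :=
  (∀ s t : ℝ, 0 ≤ s → s ≤ t →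
    (∀ k, 1 ≤ k → Θ₁ k ∉ Set.Ioc s t ∧ Θ₂ k ∉ Set.Ioc s t) → y t = y s) ∧
  (∀ k, 1 ≤ k → ∀ s, 0 ≤ s → s < Θ₁ k →
    (∀ j, 1 ≤ j → Θ₁ j ∉ Set.Ioo s (Θ₁ k) ∧ Θ₂ j ∉ Set.Ioc s (Θ₁ k)) →
    (∀ u ∈ Set.Ico s (Θ₁ k), σ u = σ s) →
    y (Θ₁ k) = max 1 (min (L : ℤ) (y s - (σ s).1))) ∧
  (∀ k, 1 ≤ k → ∀ s, 0 ≤ s → s < Θ₂ k →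
    (∀ j, 1 ≤ j → Θ₂ j ∉ Set.Ioo s (Θ₂ k) ∧ Θ₁ j ∉ Set.Ioc s (Θ₂ k)) →
    (∀ u ∈ Set.Ico s (Θ₂ k), σ u = σ s) →
    y (Θ₂ k) = max 1 (min (L : ℤ) (y s + (σ s).2)))

lemma clockSum_eq_sum (Θ : Fin 2 → ℕ → ℝ) (hmono : ∀ i, Monotone (Θ i)) (σ : ℝ → ℤ × ℤ)
    (t : ℝ) (K : ℕ) (h0 : t < Θ 0 K) (h1 : t < Θ 1 K) :
    clockSum Θ σ t =
      (∑ k ∈ Finset.range K, if Θ 1 (k + 1) ≤ t then ((σ (Θ 1 (k + 1))).2 : ℝ) else 0) -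
      (∑ k ∈ Finset.range K, if Θ 0 (k + 1) ≤ t then ((σ (Θ 0 (k + 1))).1 : ℝ) else 0) := by
  unfold clockSum
  rw [tsum_eq_sum (s := Finset.range K) ?_, tsum_eq_sum (s := Finset.range K) ?_]
  · intro k hk
    have hKk : K ≤ k + 1 := le_trans (by simpa using hk) (Nat.le_succ k)
    have := hmono 0 hKk
    rw [if_neg (by linarith)]
  · intro k hk
    have hKk : K ≤ k + 1 := le_trans (by simpa using hk) (Nat.le_succ k)
    have := hmono 1 hKk
    rw [if_neg (by linarith)]

lemma clip_bounds (L a : ℤ) (h : 2 ≤ L) : 1 ≤ max 1 (min L a) ∧ max 1 (min L a) ≤ L := by omega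
lemma clip_eq_top (L a : ℤ) (h1 : 1 ≤ L) (h : L ≤ a) : max 1 (min L a) = L := by omega
lemma clip_eq_bot (L a : ℤ) (h1 : 1 ≤ L) (h : a ≤ 1) : max 1 (min L a) = 1 := by omega
lemma clip_ge (L a : ℤ) (h : ¬ L ≤ a) : a ≤ max 1 (min L a) := by omega
lemma clip_le (L a : ℤ) (h1 : 1 ≤ L) (h : ¬ a ≤ 1) : max 1 (min L a) ≤ a := by omega

lemma key_induction
    (L : ℕ) (hL : 2 ≤ L)
    (Θ : Fin 2 → ℕ → ℝ)
    (hΘ0 : ∀ i, Θ i 0 = 0) (hΘmono : ∀ i, StrictMono (Θ i))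
    (hΘtop : ∀ i, Tendsto (Θ i) atTop atTop)
    (hΘdistinct : ∀ j k : ℕ, 1 ≤ j → 1 ≤ k → Θ 0 j ≠ Θ 1 k)
    (σ : ℝ → ℤ × ℤ)
    (hσb : ∀ t, (-1 : ℤ) ≤ (σ t).1 ∧ (σ t).1 ≤ 1 ∧ (-1 : ℤ) ≤ (σ t).2 ∧ (σ t).2 ≤ 1)
    (hσΘ : ∀ (i : Fin 2) (k : ℕ), 1 ≤ k →
      ∃ δ : ℝ, 0 < δ ∧ ∀ u ∈ Set.Ioc (Θ i k - δ) (Θ i k), σ u = σ (Θ i k))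
    (z : ℝ → ℤ) (hz : IsDiscreteRTP L (Θ 0) (Θ 1) σ z)
    (hz0 : z 0 ∈ Set.Icc 1 (L : ℤ)) :
    ∀ t, 0 ≤ t →
      (1 ≤ z t ∧ z t ≤ L) ∧
      ((∃ τ, 0 ≤ τ ∧ τ ≤ t ∧ z τ = L) ∨ ((z 0 : ℝ) + clockSum Θ σ t ≤ z t)) ∧
      ((∃ τ, 0 ≤ τ ∧ τ ≤ t ∧ z τ = 1) ∨ ((z t : ℝ) ≤ (z 0 : ℝ) + clockSum Θ σ t)) := by
  classical
  have hmono : ∀ i, Monotone (Θ i) := fun i => (hΘmono i).monotone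
  have hpos : ∀ (i : Fin 2) (k : ℕ), 1 ≤ k → 0 < Θ i k := by
    intro i k hk
    have := hΘmono i (show 0 < k from hk)
    rwa [hΘ0] at this
  have hnn : ∀ (i : Fin 2) (k : ℕ), 0 ≤ Θ i k := by
    intro i k
    rcases Nat.eq_zero_or_pos k with h | h
    · rw [h, hΘ0]
    · exact (hpos i k h).le
  have sandwich : ∀ (i : Fin 2) (t : ℝ), 0 ≤ t → ∃ k, Θ i k ≤ t ∧ t < Θ i (k + 1) := by
    intro i t ht
    have h : ∃ K, t < Θ i K := ((hΘtop i).eventually_gt_atTop t).exists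
    have hK : t < Θ i (Nat.find h) := Nat.find_spec h
    have hK0 : Nat.find h ≠ 0 := by
      intro h0
      rw [h0, hΘ0] at hK
      linarith
    refine ⟨Nat.find h - 1, ?_, ?_⟩
    · have hmin : ¬ t < Θ i (Nat.find h - 1) :=
        Nat.find_min h (by omega)
      exact not_lt.mp hmin
    · have heq : Nat.find h - 1 + 1 = Nat.find h := by omega
      rw [heq]
      exact hK
  suffices H : ∀ n k₀ k₁ (t : ℝ), k₀ + k₁ = n → 0 ≤ t →
      Θ 0 k₀ ≤ t → t < Θ 0 (k₀ + 1) → Θ 1 k₁ ≤ t → t < Θ 1 (k₁ + 1) →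
      (1 ≤ z t ∧ z t ≤ L) ∧
      ((∃ τ, 0 ≤ τ ∧ τ ≤ t ∧ z τ = L) ∨ ((z 0 : ℝ) + clockSum Θ σ t ≤ z t)) ∧
      ((∃ τ, 0 ≤ τ ∧ τ ≤ t ∧ z τ = 1) ∨ ((z t : ℝ) ≤ (z 0 : ℝ) + clockSum Θ σ t)) by
    intro t ht
    obtain ⟨k₀, h₀, h₀'⟩ := sandwich 0 t ht
    obtain ⟨k₁, h₁, h₁'⟩ := sandwich 1 t ht
    exact H (k₀ + k₁) k₀ k₁ t rfl ht h₀ h₀' h₁ h₁'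
  intro n
  induction n using Nat.strong_induction_on with
  | _ n IH =>
  intro k₀ k₁ t hsum ht h₀ h₀' h₁ h₁'
  by_cases hbase : k₀ = 0 ∧ k₁ = 0
  · -- base case : no rings in (0, t]
    obtain ⟨hb0, hb1⟩ := hbase
    subst hb0; subst hb1
    have hzt : z t = z 0 := by
      refine hz.1 0 t le_rfl ht fun k hk => ⟨?_, ?_⟩
      · rintro ⟨-, hk2⟩
        have : Θ 0 1 ≤ Θ 0 k := hmono 0 hk
        linarith
      · rintro ⟨-, hk2⟩
        have : Θ 1 1 ≤ Θ 1 k := hmono 1 hk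
        linarith
    have hS : clockSum Θ σ t = 0 := by
      rw [clockSum_eq_sum Θ hmono σ t 1 h₀' h₁']
      simp only [Finset.sum_range_one]
      rw [if_neg (by linarith), if_neg (by linarith)]
      ring
    rw [hzt, hS]
    refine ⟨⟨hz0.1, hz0.2⟩, Or.inr (by simp), Or.inr (by simp)⟩
  · -- inductive step : there is a last ring r ≤ t
    obtain ⟨K, hK0, hK1⟩ : ∃ K, t < Θ 0 K ∧ t < Θ 1 K := by
      have := (((hΘtop 0).eventually_gt_atTop t).and ((hΘtop 1).eventually_gt_atTop t)).exists
      exact this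
    have htri : Θ 1 k₁ < Θ 0 k₀ ∨ Θ 0 k₀ < Θ 1 k₁ := by
      rcases Nat.eq_zero_or_pos k₀ with hc0 | hc0
      · have hc1 : 1 ≤ k₁ := by omega
        right; rw [hc0, hΘ0]; exact hpos 1 k₁ hc1
      rcases Nat.eq_zero_or_pos k₁ with hc1 | hc1
      · left; rw [hc1, hΘ0]; exact hpos 0 k₀ hc0
      · exact (lt_or_gt_of_ne (hΘdistinct k₀ k₁ hc0 hc1)).symm
    rcases htri with hlt | hlt
    · -- last ring is Θ 0 k₀, jump of clock 1 : z r = clip (z s - σ¹ s)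
      have hk₀ : 1 ≤ k₀ := by
        by_contra hc
        have : k₀ = 0 := by omega
        rw [this, hΘ0] at hlt
        exact absurd hlt (not_lt.mpr (hnn 1 k₁))
      set r := Θ 0 k₀ with hr
      obtain ⟨δ, hδpos, hδ⟩ := hσΘ 0 k₀ hk₀
      set s := max (max (Θ 0 (k₀ - 1)) (Θ 1 k₁)) (r - δ / 2) with hsdef
      have hprevlt : Θ 0 (k₀ - 1) < r := hΘmono 0 (by omega)
      have hsr : s < r := by
        apply max_lt (max_lt hprevlt hlt)
        linarith
      have hAs : Θ 0 (k₀ - 1) ≤ s := le_trans (le_max_left _ _) (le_max_left _ _)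
      have hBs : Θ 1 k₁ ≤ s := le_trans (le_max_right _ _) (le_max_left _ _)
      have hCs : r - δ / 2 ≤ s := le_max_right _ _
      have hs0 : 0 ≤ s := le_trans (hnn 1 k₁) hBs
      have hrt : r ≤ t := h₀
      have hσr : ∀ u, s ≤ u → u ≤ r → σ u = σ r := by
        intro u hu1 hu2
        exact hδ u ⟨by linarith, hu2⟩
      have hσs : σ s = σ r := hσr s le_rfl hsr.le
      -- z is constant on [r, t]
      have hconst : z t = z r := by
        refine hz.1 r t (hnn 0 k₀) hrt fun j hj => ⟨?_, ?_⟩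
        · rintro ⟨hj1, hj2⟩
          have : j < k₀ + 1 := (hΘmono 0).lt_iff_lt.mp (lt_of_le_of_lt hj2 h₀')
          have : Θ 0 j ≤ r := hmono 0 (by omega)
          linarith
        · rintro ⟨hj1, hj2⟩
          have : j < k₁ + 1 := (hΘmono 1).lt_iff_lt.mp (lt_of_le_of_lt hj2 h₁')
          have : Θ 1 j ≤ Θ 1 k₁ := hmono 1 (by omega)
          linarith
      -- jump formula at r
      have hjump : z r = max 1 (min (L : ℤ) (z s - (σ r).1)) := by
        rw [← hσs]
        refine hz.2.1 k₀ hk₀ s hs0 hsr (fun j hj => ⟨?_, ?_⟩) ?_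
        · rintro ⟨hj1, hj2⟩
          have : j < k₀ := (hΘmono 0).lt_iff_lt.mp hj2
          have : Θ 0 j ≤ Θ 0 (k₀ - 1) := hmono 0 (by omega)
          linarith
        · rintro ⟨hj1, hj2⟩
          have hne : Θ 1 j ≠ r := (hΘdistinct k₀ j hk₀ hj).symm
          have hjr : Θ 1 j < r := lt_of_le_of_ne hj2 hne
          have : j < k₁ + 1 := (hΘmono 1).lt_iff_lt.mp (lt_of_le_of_lt (by linarith : Θ 1 j ≤ t) h₁')
          have : Θ 1 j ≤ Θ 1 k₁ := hmono 1 (by omega)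
          linarith
        · intro u hu
          rw [hσr u hu.1 hu.2.le, hσs]
      -- apply induction hypothesis at s
      have hk₀s : k₀ - 1 + 1 = k₀ := Nat.succ_pred_eq_of_pos hk₀
      have hprev := IH (k₀ - 1 + k₁) (by omega) (k₀ - 1) k₁ s rfl hs0 hAs
        (by rw [hk₀s]; exact hsr) hBs (lt_trans (lt_of_lt_of_le hsr hrt) h₁')
      -- clockSum relation
      have hk₀K : k₀ - 1 < K := by
        have : Θ 0 k₀ < Θ 0 K := lt_of_le_of_lt hrt hK0
        have := (hΘmono 0).lt_iff_lt.mp this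
        omega
      have hSrel : clockSum Θ σ t = clockSum Θ σ s - ((σ r).1 : ℝ) := by
        rw [clockSum_eq_sum Θ hmono σ t K hK0 hK1,
            clockSum_eq_sum Θ hmono σ s K (by linarith) (by linarith)]
        have e1 : (∑ k ∈ Finset.range K, if Θ 1 (k + 1) ≤ t then ((σ (Θ 1 (k + 1))).2 : ℝ) else 0)
            = ∑ k ∈ Finset.range K, if Θ 1 (k + 1) ≤ s then ((σ (Θ 1 (k + 1))).2 : ℝ) else 0 := by
          refine Finset.sum_congr rfl fun m _ => ?_
          by_cases h : Θ 1 (m + 1) ≤ s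
          · rw [if_pos h, if_pos (by linarith)]
          · rw [if_neg h, if_neg ?_]
            intro hle
            have : m + 1 < k₁ + 1 := (hΘmono 1).lt_iff_lt.mp (lt_of_le_of_lt hle h₁')
            have : Θ 1 (m + 1) ≤ Θ 1 k₁ := hmono 1 (by omega)
            exact h (le_trans this hBs)
        have e0 : (∑ k ∈ Finset.range K, if Θ 0 (k + 1) ≤ t then ((σ (Θ 0 (k + 1))).1 : ℝ) else 0)
            = (∑ k ∈ Finset.range K, if Θ 0 (k + 1) ≤ s then ((σ (Θ 0 (k + 1))).1 : ℝ) else 0)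
              + ((σ r).1 : ℝ) := by
          have hdiff : ∑ m ∈ Finset.range K,
              ((if Θ 0 (m + 1) ≤ t then ((σ (Θ 0 (m + 1))).1 : ℝ) else 0)
               - (if Θ 0 (m + 1) ≤ s then ((σ (Θ 0 (m + 1))).1 : ℝ) else 0))
              = ((σ r).1 : ℝ) := by
            rw [Finset.sum_eq_single_of_mem (k₀ - 1) (Finset.mem_range.mpr hk₀K)]
            · rw [hk₀s, ← hr, if_pos hrt, if_neg (by linarith)]
              ring
            · intro m hm hne
              rcases lt_or_ge (m + 1) k₀ with hc | hc
              · have h1 : Θ 0 (m + 1) ≤ Θ 0 (k₀ - 1) := hmono 0 (by omega)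
                rw [if_pos (by linarith), if_pos (by linarith)]
                ring
              · have hc' : k₀ + 1 ≤ m + 1 := by omega
                have h1 : Θ 0 (k₀ + 1) ≤ Θ 0 (m + 1) := hmono 0 hc'
                rw [if_neg (by linarith), if_neg (by linarith)]
                ring
          rw [Finset.sum_sub_distrib] at hdiff
          linarith
        rw [e1, e0]
        ring
      -- assemble
      obtain ⟨⟨hzs1, hzsL⟩, hup, hlo⟩ := hprev
      have hσ1 := hσb r
      have hvalr : z t = max 1 (min (L : ℤ) (z s - (σ r).1)) := by rw [hconst, hjump]
      have hLz : (1 : ℤ) ≤ (L : ℤ) := by exact_mod_cast Nat.one_le_of_lt hL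
      have hL2 : (2 : ℤ) ≤ (L : ℤ) := by exact_mod_cast hL
      refine ⟨⟨by rw [hvalr]; exact (clip_bounds _ _ hL2).1,
              by rw [hvalr]; exact (clip_bounds _ _ hL2).2⟩, ?_, ?_⟩
      · rcases hup with ⟨τ, hτ0, hτs, hτL⟩ | hup
        · exact Or.inl ⟨τ, hτ0, le_trans hτs (le_trans hsr.le hrt), hτL⟩
        · by_cases hcase : (L : ℤ) ≤ z s - (σ r).1
          · refine Or.inl ⟨r, hnn 0 k₀, hrt, ?_⟩
            rw [hjump]; exact clip_eq_top _ _ hLz hcase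
          · right
            have h1 : z s - (σ r).1 ≤ z t := by rw [hvalr]; exact clip_ge _ _ hcase
            rw [hSrel]
            have h1' : (z s : ℝ) - ((σ r).1 : ℝ) ≤ (z t : ℝ) := by exact_mod_cast h1
            linarith
      · rcases hlo with ⟨τ, hτ0, hτs, hτ1⟩ | hlo
        · exact Or.inl ⟨τ, hτ0, le_trans hτs (le_trans hsr.le hrt), hτ1⟩
        · by_cases hcase : z s - (σ r).1 ≤ 1
          · refine Or.inl ⟨r, hnn 0 k₀, hrt, ?_⟩
            rw [hjump]; exact clip_eq_bot _ _ hLz hcase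
          · right
            have h1 : z t ≤ z s - (σ r).1 := by rw [hvalr]; exact clip_le _ _ hLz hcase
            rw [hSrel]
            have h1' : (z t : ℝ) ≤ (z s : ℝ) - ((σ r).1 : ℝ) := by exact_mod_cast h1
            linarith
    · -- last ring is Θ 1 k₁, jump of clock 2 : z r = clip (z s + σ² s)
      have hk₁ : 1 ≤ k₁ := by
        by_contra hc
        have : k₁ = 0 := by omega
        rw [this, hΘ0] at hlt
        exact absurd hlt (not_lt.mpr (hnn 0 k₀))
      set r := Θ 1 k₁ with hr
      obtain ⟨δ, hδpos, hδ⟩ := hσΘ 1 k₁ hk₁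
      set s := max (max (Θ 1 (k₁ - 1)) (Θ 0 k₀)) (r - δ / 2) with hsdef
      have hprevlt : Θ 1 (k₁ - 1) < r := hΘmono 1 (by omega)
      have hsr : s < r := by
        apply max_lt (max_lt hprevlt hlt)
        linarith
      have hAs : Θ 1 (k₁ - 1) ≤ s := le_trans (le_max_left _ _) (le_max_left _ _)
      have hBs : Θ 0 k₀ ≤ s := le_trans (le_max_right _ _) (le_max_left _ _)
      have hCs : r - δ / 2 ≤ s := le_max_right _ _
      have hs0 : 0 ≤ s := le_trans (hnn 0 k₀) hBs
      have hrt : r ≤ t := h₁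
      have hσr : ∀ u, s ≤ u → u ≤ r → σ u = σ r := by
        intro u hu1 hu2
        exact hδ u ⟨by linarith, hu2⟩
      have hσs : σ s = σ r := hσr s le_rfl hsr.le
      have hconst : z t = z r := by
        refine hz.1 r t (hnn 1 k₁) hrt fun j hj => ⟨?_, ?_⟩
        · rintro ⟨hj1, hj2⟩
          have : j < k₀ + 1 := (hΘmono 0).lt_iff_lt.mp (lt_of_le_of_lt hj2 h₀')
          have : Θ 0 j ≤ Θ 0 k₀ := hmono 0 (by omega)
          linarith
        · rintro ⟨hj1, hj2⟩
          have : j < k₁ + 1 := (hΘmono 1).lt_iff_lt.mp (lt_of_le_of_lt hj2 h₁')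
          have : Θ 1 j ≤ r := hmono 1 (by omega)
          linarith
      have hjump : z r = max 1 (min (L : ℤ) (z s + (σ r).2)) := by
        rw [← hσs]
        refine hz.2.2 k₁ hk₁ s hs0 hsr (fun j hj => ⟨?_, ?_⟩) ?_
        · rintro ⟨hj1, hj2⟩
          have : j < k₁ := (hΘmono 1).lt_iff_lt.mp hj2
          have : Θ 1 j ≤ Θ 1 (k₁ - 1) := hmono 1 (by omega)
          linarith
        · rintro ⟨hj1, hj2⟩
          have hne : Θ 0 j ≠ r := hΘdistinct j k₁ hj hk₁
          have hjr : Θ 0 j < r := lt_of_le_of_ne hj2 hne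
          have : j < k₀ + 1 := (hΘmono 0).lt_iff_lt.mp (lt_of_le_of_lt (by linarith : Θ 0 j ≤ t) h₀')
          have : Θ 0 j ≤ Θ 0 k₀ := hmono 0 (by omega)
          linarith
        · intro u hu
          rw [hσr u hu.1 hu.2.le, hσs]
      have hk₁s : k₁ - 1 + 1 = k₁ := Nat.succ_pred_eq_of_pos hk₁
      have hprev := IH (k₀ + (k₁ - 1)) (by omega) k₀ (k₁ - 1) s rfl hs0 hBs
        (lt_trans (lt_of_lt_of_le hsr hrt) h₀') hAs (by rw [hk₁s]; exact hsr)
      have hk₁K : k₁ - 1 < K := by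
        have : Θ 1 k₁ < Θ 1 K := lt_of_le_of_lt hrt hK1
        have := (hΘmono 1).lt_iff_lt.mp this
        omega
      have hSrel : clockSum Θ σ t = clockSum Θ σ s + ((σ r).2 : ℝ) := by
        rw [clockSum_eq_sum Θ hmono σ t K hK0 hK1,
            clockSum_eq_sum Θ hmono σ s K (by linarith) (by linarith)]
        have e0 : (∑ k ∈ Finset.range K, if Θ 0 (k + 1) ≤ t then ((σ (Θ 0 (k + 1))).1 : ℝ) else 0)
            = ∑ k ∈ Finset.range K, if Θ 0 (k + 1) ≤ s then ((σ (Θ 0 (k + 1))).1 : ℝ) else 0 := by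
          refine Finset.sum_congr rfl fun m _ => ?_
          by_cases h : Θ 0 (m + 1) ≤ s
          · rw [if_pos h, if_pos (by linarith)]
          · rw [if_neg h, if_neg ?_]
            intro hle
            have : m + 1 < k₀ + 1 := (hΘmono 0).lt_iff_lt.mp (lt_of_le_of_lt hle h₀')
            have : Θ 0 (m + 1) ≤ Θ 0 k₀ := hmono 0 (by omega)
            exact h (le_trans this hBs)
        have e1 : (∑ k ∈ Finset.range K, if Θ 1 (k + 1) ≤ t then ((σ (Θ 1 (k + 1))).2 : ℝ) else 0)
            = (∑ k ∈ Finset.range K, if Θ 1 (k + 1) ≤ s then ((σ (Θ 1 (k + 1))).2 : ℝ) else 0)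
              + ((σ r).2 : ℝ) := by
          have hdiff : ∑ m ∈ Finset.range K,
              ((if Θ 1 (m + 1) ≤ t then ((σ (Θ 1 (m + 1))).2 : ℝ) else 0)
               - (if Θ 1 (m + 1) ≤ s then ((σ (Θ 1 (m + 1))).2 : ℝ) else 0))
              = ((σ r).2 : ℝ) := by
            rw [Finset.sum_eq_single_of_mem (k₁ - 1) (Finset.mem_range.mpr hk₁K)]
            · rw [hk₁s, ← hr, if_pos hrt, if_neg (by linarith)]
              ring
            · intro m hm hne
              rcases lt_or_ge (m + 1) k₁ with hc | hc
              · have h1 : Θ 1 (m + 1) ≤ Θ 1 (k₁ - 1) := hmono 1 (by omega)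
                rw [if_pos (by linarith), if_pos (by linarith)]
                ring
              · have hc' : k₁ + 1 ≤ m + 1 := by omega
                have h1 : Θ 1 (k₁ + 1) ≤ Θ 1 (m + 1) := hmono 1 hc'
                rw [if_neg (by linarith), if_neg (by linarith)]
                ring
          rw [Finset.sum_sub_distrib] at hdiff
          linarith
        rw [e1, e0]
        ring
      obtain ⟨⟨hzs1, hzsL⟩, hup, hlo⟩ := hprev
      have hσ1 := hσb r
      have hvalr : z t = max 1 (min (L : ℤ) (z s + (σ r).2)) := by rw [hconst, hjump]
      have hLz : (1 : ℤ) ≤ (L : ℤ) := by exact_mod_cast Nat.one_le_of_lt hL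
      have hL2 : (2 : ℤ) ≤ (L : ℤ) := by exact_mod_cast hL
      refine ⟨⟨by rw [hvalr]; exact (clip_bounds _ _ hL2).1,
              by rw [hvalr]; exact (clip_bounds _ _ hL2).2⟩, ?_, ?_⟩
      · rcases hup with ⟨τ, hτ0, hτs, hτL⟩ | hup
        · exact Or.inl ⟨τ, hτ0, le_trans hτs (le_trans hsr.le hrt), hτL⟩
        · by_cases hcase : (L : ℤ) ≤ z s + (σ r).2
          · refine Or.inl ⟨r, hnn 1 k₁, hrt, ?_⟩
            rw [hjump]; exact clip_eq_top _ _ hLz hcase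
          · right
            have h1 : z s + (σ r).2 ≤ z t := by rw [hvalr]; exact clip_ge _ _ hcase
            rw [hSrel]
            have h1' : (z s : ℝ) + ((σ r).2 : ℝ) ≤ (z t : ℝ) := by exact_mod_cast h1
            linarith
      · rcases hlo with ⟨τ, hτ0, hτs, hτ1⟩ | hlo
        · exact Or.inl ⟨τ, hτ0, le_trans hτs (le_trans hsr.le hrt), hτ1⟩
        · by_cases hcase : z s + (σ r).2 ≤ 1
          · refine Or.inl ⟨r, hnn 1 k₁, hrt, ?_⟩
            rw [hjump]; exact clip_eq_bot _ _ hLz hcase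
          · right
            have h1 : z t ≤ z s + (σ r).2 := by rw [hvalr]; exact clip_le _ _ hLz hcase
            rw [hSrel]
            have h1' : (z t : ℝ) ≤ (z s : ℝ) + ((σ r).2 : ℝ) := by exact_mod_cast h1
            linarith

/-- **Deterministic coupling lemma for the discrete processes.** Fix a realization of the
velocity pair `σ` and of the ring times `Θ` of the two Poisson clocks, and let `y, y'` be two
discrete processes on `{1, …, L}` driven by the same velocities and the same clocks. If
`|S^L(T)| ≥ L - 1`, then `inf {t ≥ 0 : y(t) = y'(t)} ≤ T`. -/
theorem discrete_coupling_deterministic_lemma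
    (S : Finset ℤ) (hS : S = V2 ∨ S = V3) (L : ℕ) (hL : 2 ≤ L) (T : ℝ) (hT : 0 < T)
    (Θ : Fin 2 → ℕ → ℝ)
    (hΘ0 : ∀ i, Θ i 0 = 0) (hΘmono : ∀ i, StrictMono (Θ i))
    (hΘtop : ∀ i, Filter.Tendsto (Θ i) Filter.atTop Filter.atTop)
    (hΘdistinct : ∀ j k : ℕ, 1 ≤ j → 1 ≤ k → Θ 0 j ≠ Θ 1 k)
    (σ : ℝ → ℤ × ℤ) (hσpc : PiecewiseConst σ) (hσval : ∀ t, σ t ∈ S ×ˢ S)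
    (hσΘ : ∀ (i : Fin 2) (k : ℕ), 1 ≤ k →
      ∃ δ : ℝ, 0 < δ ∧ ∀ u ∈ Set.Ioc (Θ i k - δ) (Θ i k), σ u = σ (Θ i k))
    (y y' : ℝ → ℤ)
    (hy : IsDiscreteRTP L (Θ 0) (Θ 1) σ y) (hy' : IsDiscreteRTP L (Θ 0) (Θ 1) σ y')
    (hy0 : y 0 ∈ Set.Icc 1 (L : ℤ)) (hy'0 : y' 0 ∈ Set.Icc 1 (L : ℤ))
    (hbig : (L : ℝ) - 1 ≤ |clockSum Θ σ T|) :
    sInf {t : ℝ | 0 ≤ t ∧ y t = y' t} ≤ T := by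
  have hσb : ∀ t, (-1 : ℤ) ≤ (σ t).1 ∧ (σ t).1 ≤ 1 ∧ (-1 : ℤ) ≤ (σ t).2 ∧ (σ t).2 ≤ 1 := by
    intro t
    have h := hσval t
    rw [Finset.mem_product] at h
    rcases hS with rfl | rfl
    · simp [V2] at h
      omega
    · simp [V3] at h
      omega
  -- min and max of the two processes are again discrete RTPs
  have hw : IsDiscreteRTP L (Θ 0) (Θ 1) σ (fun t => min (y t) (y' t)) := by
    refine ⟨fun s t hs hst h => ?_, fun k hk s hs hlt h hc => ?_, fun k hk s hs hlt h hc => ?_⟩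
    · simp only
      rw [hy.1 s t hs hst h, hy'.1 s t hs hst h]
    · simp only
      rw [hy.2.1 k hk s hs hlt h hc, hy'.2.1 k hk s hs hlt h hc]
      omega
    · simp only
      rw [hy.2.2 k hk s hs hlt h hc, hy'.2.2 k hk s hs hlt h hc]
      omega
  have hv : IsDiscreteRTP L (Θ 0) (Θ 1) σ (fun t => max (y t) (y' t)) := by
    refine ⟨fun s t hs hst h => ?_, fun k hk s hs hlt h hc => ?_, fun k hk s hs hlt h hc => ?_⟩
    · simp only
      rw [hy.1 s t hs hst h, hy'.1 s t hs hst h]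
    · simp only
      rw [hy.2.1 k hk s hs hlt h hc, hy'.2.1 k hk s hs hlt h hc]
      omega
    · simp only
      rw [hy.2.2 k hk s hs hlt h hc, hy'.2.2 k hk s hs hlt h hc]
      omega
  have hky := key_induction L hL Θ hΘ0 hΘmono hΘtop hΘdistinct σ hσb hσΘ y hy hy0
  have hky' := key_induction L hL Θ hΘ0 hΘmono hΘtop hΘdistinct σ hσb hσΘ y' hy' hy'0
  have hkw := key_induction L hL Θ hΘ0 hΘmono hΘtop hΘdistinct σ hσb hσΘ
    (fun t => min (y t) (y' t)) hw ⟨le_min hy0.1 hy'0.1, (min_le_left _ _).trans hy0.2⟩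
  have hkv := key_induction L hL Θ hΘ0 hΘmono hΘtop hΘdistinct σ hσb hσΘ
    (fun t => max (y t) (y' t)) hv ⟨le_max_of_le_left hy0.1, max_le hy0.2 hy'0.2⟩
  have hbdd : BddBelow {t : ℝ | 0 ≤ t ∧ y t = y' t} := ⟨0, fun x hx => hx.1⟩
  have hfin : ∀ τ, 0 ≤ τ → τ ≤ T → y τ = y' τ → sInf {t : ℝ | 0 ≤ t ∧ y t = y' t} ≤ T :=
    fun τ h0 hτT heq => le_trans (csInf_le hbdd ⟨h0, heq⟩) hτT
  rcases le_abs.mp hbig with hpos | hneg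
  · -- S T ≥ L - 1 : the min process hits L
    obtain ⟨τ, hτ0, hτT, hτ⟩ :
        ∃ τ, 0 ≤ τ ∧ τ ≤ T ∧ min (y τ) (y' τ) = (L : ℤ) := by
      rcases (hkw T hT.le).2.1 with ⟨τ, hτ0, hτT, hτ⟩ | h
      · exact ⟨τ, hτ0, hτT, hτ⟩
      · refine ⟨T, hT.le, le_rfl, ?_⟩
        have hwl : min (y T) (y' T) ≤ (L : ℤ) := (hkw T hT.le).1.2
        have hw1 : (1 : ℤ) ≤ min (y 0) (y' 0) := le_min hy0.1 hy'0.1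
        have hc1 : (1 : ℝ) ≤ ((min (y 0) (y' 0) : ℤ) : ℝ) := by exact_mod_cast hw1
        have hc2 : ((min (y T) (y' T) : ℤ) : ℝ) ≤ (L : ℝ) := by exact_mod_cast hwl
        have : ((min (y T) (y' T) : ℤ) : ℝ) = (L : ℝ) := by
          linarith
        exact_mod_cast this
    have h1 : y τ ≤ (L : ℤ) := (hky τ hτ0).1.2
    have h2 : y' τ ≤ (L : ℤ) := (hky' τ hτ0).1.2
    exact hfin τ hτ0 hτT (by omega)
  · -- S T ≤ -(L - 1) : the max process hits 1
    obtain ⟨τ, hτ0, hτT, hτ⟩ :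
        ∃ τ, 0 ≤ τ ∧ τ ≤ T ∧ max (y τ) (y' τ) = (1 : ℤ) := by
      rcases (hkv T hT.le).2.2 with ⟨τ, hτ0, hτT, hτ⟩ | h
      · exact ⟨τ, hτ0, hτT, hτ⟩
      · refine ⟨T, hT.le, le_rfl, ?_⟩
        have hvl : (1 : ℤ) ≤ max (y T) (y' T) := (hkv T hT.le).1.1
        have hv0 : max (y 0) (y' 0) ≤ (L : ℤ) := max_le hy0.2 hy'0.2
        have hc1 : ((max (y 0) (y' 0) : ℤ) : ℝ) ≤ (L : ℝ) := by exact_mod_cast hv0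
        have hc2 : (1 : ℝ) ≤ ((max (y T) (y' T) : ℤ) : ℝ) := by exact_mod_cast hvl
        have : ((max (y T) (y' T) : ℤ) : ℝ) = (1 : ℝ) := by
          linarith
        exact_mod_cast this
    have h1 : (1 : ℤ) ≤ y τ := (hky τ hτ0).1.1
    have h2 : (1 : ℤ) ≤ y' τ := (hky' τ hτ0).1.1
    exact hfin τ hτ0 hτT (by omega)
end

section
/- Let ℓ>0, T>0, let 0=T₀<T₁<⋯<T_n=T be a finite partition of [0,T] and let v₀,…,v_{n−1}∈ℝ; set v(s)=v_i for s∈[T_i,T_{i+1}). Given x₀, x̃₀∈[0,ℓ], define x recursively by x(T₀)=x₀ and x(t)=max(0, min(ℓ, x(T_i) + v_i·(t−T_i))) for t∈[T_i,T_{i+1}], and define x̃ in the same way from x̃₀ with the same partition and the same v_i. If there exist t₁≤t₂≤T such that | ∫_{t₁}^{t₂} v(s) ds | ≥ ℓ, then there exists t≤T with x(t) = x̃(t). -/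
open Set MeasureTheory

lemma clip_mem {ℓ : ℝ} (hℓ : 0 ≤ ℓ) (z : ℝ) : clip ℓ z ∈ Set.Icc 0 ℓ :=
  ⟨le_max_left _ _, max_le hℓ (min_le_left _ _)⟩

lemma clip_mono {ℓ a b : ℝ} (h : a ≤ b) : clip ℓ a ≤ clip ℓ b :=
  max_le_max le_rfl (min_le_min le_rfl h)

lemma lt_of_clip_lt {ℓ p : ℝ} (h : clip ℓ p < ℓ) : p < ℓ := by
  by_contra hc
  push_neg at hc
  rw [clip, min_eq_left hc] at h
  exact absurd (le_max_right 0 ℓ) (not_le.mpr h)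

lemma pos_of_clip_pos {ℓ p : ℝ} (h : 0 < clip ℓ p) : 0 < p := by
  by_contra hc
  push_neg at hc
  have h2 : clip ℓ p ≤ max 0 p := max_le_max le_rfl (min_le_right ℓ p)
  rw [max_eq_left hc] at h2
  linarith

lemma clip_step {ℓ p q : ℝ} (hp : p < ℓ) (hq : q < ℓ) (h : 0 ≤ p ∨ q ≤ p) :
    clip ℓ p + (q - p) ≤ clip ℓ q := by
  rw [clip, clip, min_eq_right hp.le, min_eq_right hq.le]
  rcases h with h | h
  · rw [max_eq_right h]
    linarith [le_max_right (0:ℝ) q]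
  · rcases le_total 0 p with h0 | h0
    · rw [max_eq_right h0]
      linarith [le_max_right (0:ℝ) q]
    · rw [max_eq_left h0, max_eq_left (h.trans h0)]
      linarith

lemma clip_step' {ℓ p q : ℝ} (hℓ : 0 < ℓ) (hp : 0 < p) (hq : 0 < q) (h : p ≤ ℓ ∨ p ≤ q) :
    clip ℓ q ≤ clip ℓ p + (q - p) := by
  rw [clip, clip, max_eq_right (le_min hℓ.le hp.le), max_eq_right (le_min hℓ.le hq.le)]
  rcases h with h | h
  · rw [min_eq_right h]
    linarith [min_le_right ℓ q]
  · rcases le_total p ℓ with h0 | h0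
    · rw [min_eq_right h0]
      linarith [min_le_right ℓ q]
    · rw [min_eq_left h0]
      linarith [min_le_left ℓ q]

lemma Tt_mono {n : ℕ} {Tt : ℕ → ℝ} (hmono : ∀ i, i < n → Tt i < Tt (i + 1)) :
    ∀ j, j ≤ n → ∀ i, i ≤ j → Tt i ≤ Tt j := by
  intro j
  induction j with
  | zero => intro _ i hi; rw [Nat.le_zero.mp hi]
  | succ m ih =>
    intro hm i hi
    rcases eq_or_lt_of_le hi with h | h
    · rw [h]
    · exact (ih ((Nat.le_succ m).trans hm) i (Nat.lt_succ_iff.mp h)).trans (hmono m hm).le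

lemma exists_index {n : ℕ} {Tt : ℕ → ℝ} (hmono : ∀ i, i < n → Tt i < Tt (i + 1)) :
    ∀ s, Tt 0 ≤ s → s < Tt n → ∃ i, i < n ∧ Tt i ≤ s ∧ s < Tt (i + 1) := by
  induction n with
  | zero => intro s h1 h2; exact absurd (h1.trans_lt h2) (lt_irrefl _)
  | succ m ih =>
    intro s h1 h2
    by_cases hc : s < Tt m
    · obtain ⟨i, hi, h⟩ := ih (fun i hi => hmono i (hi.trans (Nat.lt_succ_self m))) s h1 hc
      exact ⟨i, hi.trans (Nat.lt_succ_self m), h⟩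
    · exact ⟨m, Nat.lt_succ_self m, not_lt.mp hc, h2⟩

lemma exists_index_Icc {n : ℕ} (hn : 0 < n) {Tt : ℕ → ℝ}
    (hmono : ∀ i, i < n → Tt i < Tt (i + 1)) :
    ∀ t, Tt 0 ≤ t → t ≤ Tt n → ∃ i, i < n ∧ Tt i ≤ t ∧ t ≤ Tt (i + 1) := by
  intro t h1 h2
  rcases lt_or_eq_of_le h2 with hl | he
  · obtain ⟨i, hi, h3, h4⟩ := exists_index hmono t h1 hl
    exact ⟨i, hi, h3, h4.le⟩
  · have hn' : n - 1 + 1 = n := Nat.succ_pred_eq_of_pos hn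
    refine ⟨n - 1, Nat.sub_lt hn one_pos, ?_, ?_⟩
    · rw [he]
      have := (hmono (n - 1) (Nat.sub_lt hn one_pos)).le
      rwa [hn'] at this
    · rw [he, hn']

lemma vfun_integrable {n : ℕ} {Tt : ℕ → ℝ} (hmono : ∀ i, i < n → Tt i < Tt (i + 1))
    {v : ℕ → ℝ} {vfun : ℝ → ℝ}
    (hvfun : ∀ i, i < n → ∀ s ∈ Set.Ico (Tt i) (Tt (i + 1)), vfun s = v i)
    (c d : ℝ) (hc : Tt 0 ≤ c) (hcd : c ≤ d) (hd : d ≤ Tt n) :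
    IntervalIntegrable vfun volume c d := by
  rw [intervalIntegrable_iff, uIoc_of_le hcd]
  have hsub : Ioc c d ⊆ (⋃ i ∈ Finset.range n, Ico (Tt i) (Tt (i + 1))) ∪ {Tt n} := by
    intro s hs
    rcases lt_or_eq_of_le (hs.2.trans hd) with hl | he
    · obtain ⟨i, hi, h3, h4⟩ := exists_index hmono s (hc.trans hs.1.le) hl
      exact Or.inl (by simp only [Set.mem_iUnion]; exact ⟨i, Finset.mem_range.mpr hi, h3, h4⟩)
    · exact Or.inr (by simp [he])
  refine IntegrableOn.mono_set (IntegrableOn.union ?_ ?_) hsub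
  · rw [integrableOn_finset_iUnion]
    intro i hi
    refine IntegrableOn.congr_fun (f := fun _ => v i)
      (integrableOn_const measure_Ico_lt_top.ne) ?_ measurableSet_Ico
    intro s hs
    exact (hvfun i (Finset.mem_range.mp hi) s hs).symm
  · have h0 : volume.restrict ({Tt n} : Set ℝ) = 0 :=
      Measure.restrict_eq_zero.mpr (measure_singleton _)
    rw [IntegrableOn, h0]
    exact integrable_zero_measure

lemma integral_piece {n : ℕ} {Tt : ℕ → ℝ} {v : ℕ → ℝ} {vfun : ℝ → ℝ}
    (hvfun : ∀ i, i < n → ∀ s ∈ Set.Ico (Tt i) (Tt (i + 1)), vfun s = v i)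
    (i : ℕ) (hi : i < n) (a b : ℝ) (ha : Tt i ≤ a) (hab : a ≤ b)
    (hb : b ≤ Tt (i + 1)) : ∫ s in a..b, vfun s = v i * (b - a) := by
  have hae : ∀ᵐ s : ℝ, s ∈ Set.uIoc a b → vfun s = v i := by
    have h2 : ∀ᵐ s : ℝ, s ≠ Tt (i + 1) := by
      rw [MeasureTheory.ae_iff]
      simpa [Set.setOf_eq_eq_singleton] using measure_singleton (Tt (i + 1))
    filter_upwards [h2] with s hs hmem
    rw [Set.uIoc_of_le hab] at hmem
    exact hvfun i hi s ⟨ha.trans hmem.1.le, lt_of_le_of_ne (hmem.2.trans hb) hs⟩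
  rw [intervalIntegral.integral_congr_ae hae, intervalIntegral.integral_const, smul_eq_mul]
  ring

lemma step_lower {ℓ : ℝ} {n : ℕ} {Tt : ℕ → ℝ} {v : ℕ → ℝ} {x : ℝ → ℝ}
    (hx : ∀ i, i < n → ∀ t ∈ Set.Icc (Tt i) (Tt (i + 1)),
      x t = clip ℓ (x (Tt i) + v i * (t - Tt i)))
    (i : ℕ) (hi : i < n) (a b : ℝ) (ha : Tt i ≤ a) (hab : a ≤ b)
    (hb : b ≤ Tt (i + 1)) (hc : x (Tt i) ∈ Set.Icc 0 ℓ)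
    (hxa : x a < ℓ) (hxb : x b < ℓ) : x a + v i * (b - a) ≤ x b := by
  have hea := hx i hi a ⟨ha, hab.trans hb⟩
  have heb := hx i hi b ⟨ha.trans hab, hb⟩
  set p := x (Tt i) + v i * (a - Tt i) with hp
  set q := x (Tt i) + v i * (b - Tt i) with hq
  have hpq : q - p = v i * (b - a) := by rw [hp, hq]; ring
  rw [hea] at hxa ⊢
  rw [heb] at hxb ⊢
  have h1 : p < ℓ := lt_of_clip_lt hxa
  have h2 : q < ℓ := lt_of_clip_lt hxb
  have hside : 0 ≤ p ∨ q ≤ p := by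
    rcases le_or_gt 0 (v i) with h | h
    · exact Or.inl (by nlinarith [hc.1, mul_nonneg h (sub_nonneg.mpr ha)])
    · exact Or.inr (by nlinarith [mul_nonpos_of_nonpos_of_nonneg h.le (sub_nonneg.mpr hab)])
  have := clip_step h1 h2 hside
  linarith

lemma step_upper {ℓ : ℝ} {n : ℕ} {Tt : ℕ → ℝ} {v : ℕ → ℝ} {x : ℝ → ℝ} (hℓ : 0 < ℓ)
    (hx : ∀ i, i < n → ∀ t ∈ Set.Icc (Tt i) (Tt (i + 1)),
      x t = clip ℓ (x (Tt i) + v i * (t - Tt i)))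
    (i : ℕ) (hi : i < n) (a b : ℝ) (ha : Tt i ≤ a) (hab : a ≤ b)
    (hb : b ≤ Tt (i + 1)) (hc : x (Tt i) ∈ Set.Icc 0 ℓ)
    (hxa : 0 < x a) (hxb : 0 < x b) : x b ≤ x a + v i * (b - a) := by
  have hea := hx i hi a ⟨ha, hab.trans hb⟩
  have heb := hx i hi b ⟨ha.trans hab, hb⟩
  set p := x (Tt i) + v i * (a - Tt i) with hp
  set q := x (Tt i) + v i * (b - Tt i) with hq
  have hpq : q - p = v i * (b - a) := by rw [hp, hq]; ring
  rw [hea] at hxa ⊢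
  rw [heb] at hxb ⊢
  have h1 : 0 < p := pos_of_clip_pos hxa
  have h2 : 0 < q := pos_of_clip_pos hxb
  have hside : p ≤ ℓ ∨ p ≤ q := by
    rcases le_or_gt (v i) 0 with h | h
    · exact Or.inl (by nlinarith [hc.2, mul_nonpos_of_nonpos_of_nonneg h (sub_nonneg.mpr ha)])
    · exact Or.inr (by nlinarith [mul_nonneg h.le (sub_nonneg.mpr hab)])
  have := clip_step' hℓ h1 h2 hside
  linarith

lemma lower_bound {ℓ : ℝ} {n : ℕ} (hn : 0 < n) {Tt : ℕ → ℝ}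
    (hmono : ∀ i, i < n → Tt i < Tt (i + 1))
    {v : ℕ → ℝ} {vfun : ℝ → ℝ}
    (hvfun : ∀ i, i < n → ∀ s ∈ Set.Ico (Tt i) (Tt (i + 1)), vfun s = v i)
    {x : ℝ → ℝ}
    (hx : ∀ i, i < n → ∀ t ∈ Set.Icc (Tt i) (Tt (i + 1)),
      x t = clip ℓ (x (Tt i) + v i * (t - Tt i)))
    (hxmem : ∀ t, Tt 0 ≤ t → t ≤ Tt n → x t ∈ Set.Icc 0 ℓ)
    (a b : ℝ) (ha : Tt 0 ≤ a) (hab : a ≤ b) (hb : b ≤ Tt n)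
    (hlt : ∀ t, a ≤ t → t ≤ b → x t < ℓ) :
    x a + ∫ s in a..b, vfun s ≤ x b := by
  obtain ⟨ia, hia, haI1, haI2⟩ := exists_index_Icc hn hmono a ha (hab.trans hb)
  have hTt0 : ∀ i, i ≤ n → Tt 0 ≤ Tt i := fun i hi => Tt_mono hmono i hi 0 (Nat.zero_le i)
  have hTtn : ∀ i, i ≤ n → Tt i ≤ Tt n := fun i hi => Tt_mono hmono n le_rfl i hi
  have key : ∀ j, ia ≤ j → j < n → ∀ b', Tt j ≤ b' → b' ≤ Tt (j + 1) → a ≤ b' →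
      (∀ t, a ≤ t → t ≤ b' → x t < ℓ) → x a + ∫ s in a..b', vfun s ≤ x b' := by
    intro j hj
    induction j, hj using Nat.le_induction with
    | base =>
      intro hn' b' hb1 hb2 hab' hlt'
      rw [integral_piece hvfun ia hn' a b' haI1 hab' hb2]
      exact step_lower hx ia hn' a b' haI1 hab' hb2
        (hxmem _ (hTt0 ia hn'.le) (hTtn ia hn'.le))
        (hlt' a le_rfl hab') (hlt' b' hab' le_rfl)
    | succ j hj ih =>
      intro hn' b' hb1 hb2 hab' hlt'
      have hjn : j < n := Nat.lt_of_succ_lt hn'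
      have ham : a ≤ Tt (j + 1) :=
        haI2.trans (Tt_mono hmono (j + 1) hn'.le (ia + 1) (Nat.succ_le_succ hj))
      have h1 := ih hjn (Tt (j + 1)) (hmono j hjn).le le_rfl ham
        (fun t ht1 ht2 => hlt' t ht1 (ht2.trans hb1))
      have h2 := step_lower hx (j + 1) hn' (Tt (j + 1)) b' le_rfl hb1 hb2
        (hxmem _ (hTt0 (j + 1) hn'.le) (hTtn (j + 1) hn'.le))
        (hlt' _ ham hb1) (hlt' b' hab' le_rfl)
      have h3 : ∫ s in a..b', vfun s =
          (∫ s in a..Tt (j + 1), vfun s) + ∫ s in Tt (j + 1)..b', vfun s :=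
        (intervalIntegral.integral_add_adjacent_intervals
          (vfun_integrable hmono hvfun a (Tt (j + 1)) ha ham (hTtn (j + 1) hn'.le))
          (vfun_integrable hmono hvfun (Tt (j + 1)) b' (hTt0 (j + 1) hn'.le) hb1
            (hb2.trans (hTtn (j + 2) hn')))).symm
      have h4 := integral_piece hvfun (j + 1) hn' (Tt (j + 1)) b' le_rfl hb1 hb2
      rw [h3, h4]
      linarith
  obtain ⟨ib, hib, hbI1, hbI2⟩ := exists_index_Icc hn hmono b (ha.trans hab) hb
  rcases le_or_gt ia ib with hcase | hcase
  · exact key ib hcase hib b hbI1 hbI2 hab hlt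
  · have hba : b ≤ a := hbI2.trans ((Tt_mono hmono ia hia.le (ib + 1) hcase).trans haI1)
    have hba' : a = b := le_antisymm hab hba
    rw [← hba', intervalIntegral.integral_same]
    linarith

lemma upper_bound {ℓ : ℝ} {n : ℕ} (hℓ : 0 < ℓ) (hn : 0 < n) {Tt : ℕ → ℝ}
    (hmono : ∀ i, i < n → Tt i < Tt (i + 1))
    {v : ℕ → ℝ} {vfun : ℝ → ℝ}
    (hvfun : ∀ i, i < n → ∀ s ∈ Set.Ico (Tt i) (Tt (i + 1)), vfun s = v i)
    {x : ℝ → ℝ}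
    (hx : ∀ i, i < n → ∀ t ∈ Set.Icc (Tt i) (Tt (i + 1)),
      x t = clip ℓ (x (Tt i) + v i * (t - Tt i)))
    (hxmem : ∀ t, Tt 0 ≤ t → t ≤ Tt n → x t ∈ Set.Icc 0 ℓ)
    (a b : ℝ) (ha : Tt 0 ≤ a) (hab : a ≤ b) (hb : b ≤ Tt n)
    (hlt : ∀ t, a ≤ t → t ≤ b → 0 < x t) :
    x b ≤ x a + ∫ s in a..b, vfun s := by
  obtain ⟨ia, hia, haI1, haI2⟩ := exists_index_Icc hn hmono a ha (hab.trans hb)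
  have hTt0 : ∀ i, i ≤ n → Tt 0 ≤ Tt i := fun i hi => Tt_mono hmono i hi 0 (Nat.zero_le i)
  have hTtn : ∀ i, i ≤ n → Tt i ≤ Tt n := fun i hi => Tt_mono hmono n le_rfl i hi
  have key : ∀ j, ia ≤ j → j < n → ∀ b', Tt j ≤ b' → b' ≤ Tt (j + 1) → a ≤ b' →
      (∀ t, a ≤ t → t ≤ b' → 0 < x t) → x b' ≤ x a + ∫ s in a..b', vfun s := by
    intro j hj
    induction j, hj using Nat.le_induction with
    | base =>
      intro hn' b' hb1 hb2 hab' hlt'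
      rw [integral_piece hvfun ia hn' a b' haI1 hab' hb2]
      exact step_upper hℓ hx ia hn' a b' haI1 hab' hb2
        (hxmem _ (hTt0 ia hn'.le) (hTtn ia hn'.le))
        (hlt' a le_rfl hab') (hlt' b' hab' le_rfl)
    | succ j hj ih =>
      intro hn' b' hb1 hb2 hab' hlt'
      have hjn : j < n := Nat.lt_of_succ_lt hn'
      have ham : a ≤ Tt (j + 1) :=
        haI2.trans (Tt_mono hmono (j + 1) hn'.le (ia + 1) (Nat.succ_le_succ hj))
      have h1 := ih hjn (Tt (j + 1)) (hmono j hjn).le le_rfl ham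
        (fun t ht1 ht2 => hlt' t ht1 (ht2.trans hb1))
      have h2 := step_upper hℓ hx (j + 1) hn' (Tt (j + 1)) b' le_rfl hb1 hb2
        (hxmem _ (hTt0 (j + 1) hn'.le) (hTtn (j + 1) hn'.le))
        (hlt' _ ham hb1) (hlt' b' hab' le_rfl)
      have h3 : ∫ s in a..b', vfun s =
          (∫ s in a..Tt (j + 1), vfun s) + ∫ s in Tt (j + 1)..b', vfun s :=
        (intervalIntegral.integral_add_adjacent_intervals
          (vfun_integrable hmono hvfun a (Tt (j + 1)) ha ham (hTtn (j + 1) hn'.le))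
          (vfun_integrable hmono hvfun (Tt (j + 1)) b' (hTt0 (j + 1) hn'.le) hb1
            (hb2.trans (hTtn (j + 2) hn')))).symm
      have h4 := integral_piece hvfun (j + 1) hn' (Tt (j + 1)) b' le_rfl hb1 hb2
      rw [h3, h4]
      linarith
  obtain ⟨ib, hib, hbI1, hbI2⟩ := exists_index_Icc hn hmono b (ha.trans hab) hb
  rcases le_or_gt ia ib with hcase | hcase
  · exact key ib hcase hib b hbI1 hbI2 hab hlt
  · have hba : b ≤ a := hbI2.trans ((Tt_mono hmono ia hia.le (ib + 1) hcase).trans haI1)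
    have hba' : a = b := le_antisymm hab hba
    rw [← hba', intervalIntegral.integral_same]
    linarith

lemma order_preserved {ℓ : ℝ} {n : ℕ} (hn : 0 < n) {Tt : ℕ → ℝ}
    (hmono : ∀ i, i < n → Tt i < Tt (i + 1))
    {v : ℕ → ℝ} {x x' : ℝ → ℝ}
    (hx : ∀ i, i < n → ∀ t ∈ Set.Icc (Tt i) (Tt (i + 1)),
      x t = clip ℓ (x (Tt i) + v i * (t - Tt i)))
    (hx' : ∀ i, i < n → ∀ t ∈ Set.Icc (Tt i) (Tt (i + 1)),
      x' t = clip ℓ (x' (Tt i) + v i * (t - Tt i)))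
    (h0 : x (Tt 0) ≤ x' (Tt 0)) :
    ∀ t, Tt 0 ≤ t → t ≤ Tt n → x t ≤ x' t := by
  have key : ∀ i, i ≤ n → x (Tt i) ≤ x' (Tt i) := by
    intro i
    induction i with
    | zero => intro _; exact h0
    | succ m ih =>
      intro hm
      have hmn : m < n := hm
      have hmem : Tt (m + 1) ∈ Set.Icc (Tt m) (Tt (m + 1)) := ⟨(hmono m hmn).le, le_rfl⟩
      rw [hx m hmn _ hmem, hx' m hmn _ hmem]
      exact clip_mono (add_le_add_left (ih hmn.le) _)
  intro t h1 h2
  obtain ⟨i, hi, hI1, hI2⟩ := exists_index_Icc hn hmono t h1 h2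
  rw [hx i hi t ⟨hI1, hI2⟩, hx' i hi t ⟨hI1, hI2⟩]
  exact clip_mono (add_le_add_left (key i hi.le) _)

lemma key_main
    (ℓ T : ℝ) (hℓ : 0 < ℓ) (hT : 0 < T)
    (n : ℕ) (Tt : ℕ → ℝ) (hT0 : Tt 0 = 0) (hTn : Tt n = T)
    (hmono : ∀ i, i < n → Tt i < Tt (i + 1))
    (v : ℕ → ℝ) (vfun : ℝ → ℝ)
    (hvfun : ∀ i, i < n → ∀ s ∈ Set.Ico (Tt i) (Tt (i + 1)), vfun s = v i)
    (x₀ x'₀ : ℝ) (hx₀ : x₀ ∈ Set.Icc 0 ℓ) (hx'₀ : x'₀ ∈ Set.Icc 0 ℓ)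
    (x x' : ℝ → ℝ)
    (hx0 : x (Tt 0) = x₀) (hx'0 : x' (Tt 0) = x'₀)
    (hx : ∀ i, i < n → ∀ t ∈ Set.Icc (Tt i) (Tt (i + 1)),
      x t = clip ℓ (x (Tt i) + v i * (t - Tt i)))
    (hx' : ∀ i, i < n → ∀ t ∈ Set.Icc (Tt i) (Tt (i + 1)),
      x' t = clip ℓ (x' (Tt i) + v i * (t - Tt i)))
    (t₁ t₂ : ℝ) (ht₁ : 0 ≤ t₁) (h₁₂ : t₁ ≤ t₂) (h₂T : t₂ ≤ T)
    (hbig : ℓ ≤ |∫ s in t₁..t₂, vfun s|)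
    (hord : x₀ ≤ x'₀) :
    ∃ t, 0 ≤ t ∧ t ≤ T ∧ x t = x' t := by
  have hn : 0 < n := by
    rcases Nat.eq_zero_or_pos n with h | h
    · rw [h, hT0] at hTn; linarith
    · exact h
  have ha1 : Tt 0 ≤ t₁ := by rw [hT0]; exact ht₁
  have ha2 : t₂ ≤ Tt n := by rw [hTn]; exact h₂T
  -- membership
  have hxmem : ∀ t, Tt 0 ≤ t → t ≤ Tt n → x t ∈ Set.Icc 0 ℓ := by
    intro t h1 h2
    obtain ⟨i, hi, hI1, hI2⟩ := exists_index_Icc hn hmono t h1 h2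
    rw [hx i hi t ⟨hI1, hI2⟩]
    exact clip_mem hℓ.le _
  have hx'mem : ∀ t, Tt 0 ≤ t → t ≤ Tt n → x' t ∈ Set.Icc 0 ℓ := by
    intro t h1 h2
    obtain ⟨i, hi, hI1, hI2⟩ := exists_index_Icc hn hmono t h1 h2
    rw [hx' i hi t ⟨hI1, hI2⟩]
    exact clip_mem hℓ.le _
  have horder := order_preserved hn hmono hx hx' (by rw [hx0, hx'0]; exact hord)
  rcases le_abs.mp hbig with hI | hI
  · -- large positive drift : x must hit ℓ
    by_cases hhit : ∃ τ, t₁ ≤ τ ∧ τ ≤ t₂ ∧ x τ = ℓ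
    · obtain ⟨τ, hτ1, hτ2, hτ⟩ := hhit
      refine ⟨τ, ht₁.trans hτ1, hτ2.trans h₂T, ?_⟩
      have h1 := horder τ (ha1.trans hτ1) (hτ2.trans ha2)
      have h2 := (hx'mem τ (ha1.trans hτ1) (hτ2.trans ha2)).2
      rw [hτ] at h1 ⊢
      exact (le_antisymm h2 h1).symm
    · push_neg at hhit
      exfalso
      have hlt : ∀ t, t₁ ≤ t → t ≤ t₂ → x t < ℓ := fun t h1 h2 =>
        lt_of_le_of_ne (hxmem t (ha1.trans h1) (h2.trans ha2)).2 (hhit t h1 h2)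
      have := lower_bound hn hmono hvfun hx hxmem t₁ t₂ ha1 h₁₂ ha2 hlt
      have h1 := (hxmem t₁ ha1 (h₁₂.trans ha2)).1
      have h2 := hlt t₂ h₁₂ le_rfl
      linarith
  · -- large negative drift : x' must hit 0
    by_cases hhit : ∃ τ, t₁ ≤ τ ∧ τ ≤ t₂ ∧ x' τ = 0
    · obtain ⟨τ, hτ1, hτ2, hτ⟩ := hhit
      refine ⟨τ, ht₁.trans hτ1, hτ2.trans h₂T, ?_⟩
      have h1 := horder τ (ha1.trans hτ1) (hτ2.trans ha2)
      have h2 := (hxmem τ (ha1.trans hτ1) (hτ2.trans ha2)).1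
      rw [hτ] at h1 ⊢
      exact le_antisymm h1 h2
    · push_neg at hhit
      exfalso
      have hlt : ∀ t, t₁ ≤ t → t ≤ t₂ → 0 < x' t := fun t h1 h2 =>
        lt_of_le_of_ne (hx'mem t (ha1.trans h1) (h2.trans ha2)).1
          (fun he => hhit t h1 h2 he.symm)
      have := upper_bound hℓ hn hmono hvfun hx' hx'mem t₁ t₂ ha1 h₁₂ ha2 hlt
      have h1 := (hx'mem t₁ ha1 (h₁₂.trans ha2)).2
      have h2 := hlt t₂ h₁₂ le_rfl
      linarith

/-- **Deterministic coupling lemma.** Two trajectories confined to `[0, ℓ]` by clipping and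
driven by the same piecewise constant velocity must meet by time `T` as soon as the
integrated velocity has a variation of size at least `ℓ` on some subinterval of `[0, T]`. -/
theorem clipped_flows_meet_of_large_velocity_variation
    (ℓ T : ℝ) (hℓ : 0 < ℓ) (hT : 0 < T)
    (n : ℕ) (Tt : ℕ → ℝ) (hT0 : Tt 0 = 0) (hTn : Tt n = T)
    (hmono : ∀ i, i < n → Tt i < Tt (i + 1))
    (v : ℕ → ℝ) (vfun : ℝ → ℝ)
    (hvfun : ∀ i, i < n → ∀ s ∈ Set.Ico (Tt i) (Tt (i + 1)), vfun s = v i)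
    (x₀ x'₀ : ℝ) (hx₀ : x₀ ∈ Set.Icc 0 ℓ) (hx'₀ : x'₀ ∈ Set.Icc 0 ℓ)
    (x x' : ℝ → ℝ)
    (hx0 : x (Tt 0) = x₀) (hx'0 : x' (Tt 0) = x'₀)
    (hx : ∀ i, i < n → ∀ t ∈ Set.Icc (Tt i) (Tt (i + 1)),
      x t = clip ℓ (x (Tt i) + v i * (t - Tt i)))
    (hx' : ∀ i, i < n → ∀ t ∈ Set.Icc (Tt i) (Tt (i + 1)),
      x' t = clip ℓ (x' (Tt i) + v i * (t - Tt i)))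
    (t₁ t₂ : ℝ) (ht₁ : 0 ≤ t₁) (h₁₂ : t₁ ≤ t₂) (h₂T : t₂ ≤ T)
    (hbig : ℓ ≤ |∫ s in t₁..t₂, vfun s|) :
    ∃ t, 0 ≤ t ∧ t ≤ T ∧ x t = x' t := by

  rcases le_total x₀ x'₀ with hord | hord
  · exact key_main ℓ T hℓ hT n Tt hT0 hTn hmono v vfun hvfun x₀ x'₀ hx₀ hx'₀ x x'
      hx0 hx'0 hx hx' t₁ t₂ ht₁ h₁₂ h₂T hbig hord
  · obtain ⟨t, h1, h2, h3⟩ := key_main ℓ T hℓ hT n Tt hT0 hTn hmono v vfun hvfun x'₀ x₀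
      hx'₀ hx₀ x' x hx'0 hx0 hx' hx t₁ t₂ ht₁ h₁₂ h₂T hbig hord
    exact ⟨t, h1, h2, h3.symm⟩
end

section
/- Let ω>0, ζ∈ℝ and t≥0. Consider the real 2×2 matrices 𝔔 = [[−ω, ω],[ω, −ω]] and V = [[−1, 0],[0, 1]]. Then the matrix exponential exp(t(𝔔+ζV)) applied to the vector (1,1)ᵀ equals the vector whose first component is e^{−tω}·( (ω−ζ)·sinh(t·√(ζ²+ω²))/√(ζ²+ω²) + cosh(t·√(ζ²+ω²)) ) and whose second component is e^{−tω}·( (ω+ζ)·sinh(t·√(ζ²+ω²))/√(ζ²+ω²) + cosh(t·√(ζ²+ω²)) ). -/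
set_option maxHeartbeats 1000000


/-- **Feynman–Kac matrix identity for the instantaneous-tumble velocity process.**
For `ω > 0`, `ζ ∈ ℝ` and `t ≥ 0`, with `𝔔 = [[-ω, ω], [ω, -ω]]` and `V = [[-1, 0], [0, 1]]`,
the matrix exponential `exp (t (𝔔 + ζ V))` applied to the vector `(1, 1)ᵀ` equals the vector
with components
`e^{-tω} ((ω ∓ ζ) sinh (t √(ζ² + ω²)) / √(ζ² + ω²) + cosh (t √(ζ² + ω²)))`. -/
theorem matrix_exp_feynman_kac_instantaneous_tumble
    (w ζ t : ℝ) (hw : 0 < w) (ht : 0 ≤ t) :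
    (NormedSpace.exp
        (t • ((Matrix.of ![![-w, w], ![w, -w]] : Matrix (Fin 2) (Fin 2) ℝ) +
          ζ • (Matrix.of ![![-1, 0], ![0, 1]] : Matrix (Fin 2) (Fin 2) ℝ)))).mulVec ![1, 1] =
      ![Real.exp (-(t * w)) *
          ((w - ζ) * Real.sinh (t * Real.sqrt (ζ ^ 2 + w ^ 2)) / Real.sqrt (ζ ^ 2 + w ^ 2) +
            Real.cosh (t * Real.sqrt (ζ ^ 2 + w ^ 2))),
        Real.exp (-(t * w)) *
          ((w + ζ) * Real.sinh (t * Real.sqrt (ζ ^ 2 + w ^ 2)) / Real.sqrt (ζ ^ 2 + w ^ 2) +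
            Real.cosh (t * Real.sqrt (ζ ^ 2 + w ^ 2)))] := by
  set r := Real.sqrt (ζ ^ 2 + w ^ 2) with hrdef
  have hr0 : 0 < r := Real.sqrt_pos.mpr (by positivity)
  have hr2 : r ^ 2 = ζ ^ 2 + w ^ 2 := Real.sq_sqrt (by positivity)
  set P : Matrix (Fin 2) (Fin 2) ℝ := Matrix.of ![![w, w], ![ζ + r, ζ - r]] with hP
  have hdet : P.det = -(2 * w * r) := by
    simp [hP, Matrix.det_fin_two, Matrix.of_apply]; ring
  have hPu : IsUnit P.det := by
    rw [hdet]; exact (neg_ne_zero.mpr (by positivity : (2:ℝ) * w * r ≠ 0)).isUnit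
  haveI : Invertible P := P.invertibleOfIsUnitDet hPu
  set D : Matrix (Fin 2) (Fin 2) ℝ :=
    Matrix.diagonal ![t * (-w + r), t * (-w - r)] with hD
  have key : t • ((Matrix.of ![![-w, w], ![w, -w]] : Matrix (Fin 2) (Fin 2) ℝ) +
      ζ • (Matrix.of ![![-1, 0], ![0, 1]] : Matrix (Fin 2) (Fin 2) ℝ)) = P * D * P⁻¹ := by
    rw [eq_comm, Matrix.mul_inv_eq_iff_eq_mul_of_invertible]
    ext i j
    fin_cases i <;> fin_cases j <;>
      simp [hP, hD, Matrix.mul_apply, Fin.sum_univ_two, Matrix.diagonal, Matrix.of_apply,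
        Matrix.smul_apply, Matrix.add_apply] <;> nlinarith [hr2]
  rw [key, Matrix.exp_conj P D (Matrix.isUnit_iff_isUnit_det P |>.mpr hPu), hD,
    Matrix.exp_diagonal]
  have hexp : NormedSpace.exp (![t * (-w + r), t * (-w - r)] : Fin 2 → ℝ) =
      ![Real.exp (t * (-w + r)), Real.exp (t * (-w - r))] := by
    rw [Pi.exp_def]
    funext i
    fin_cases i <;> simp [← Real.exp_eq_exp_ℝ]
  rw [hexp]
  have hPinv : P⁻¹ = (-(2 * w * r))⁻¹ • Matrix.of ![![ζ - r, -w], ![-(ζ + r), w]] := by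
    rw [Matrix.inv_def, hdet, Ring.inverse_eq_inv']
    congr 1
    rw [hP]
    ext i j
    fin_cases i <;> fin_cases j <;> simp [Matrix.adjugate_fin_two]
  rw [hPinv]
  have he1 : Real.exp (t * (-w + r)) = Real.exp (-(t * w)) * Real.exp (t * r) := by
    rw [← Real.exp_add]; ring_nf
  have he2 : Real.exp (t * (-w - r)) = Real.exp (-(t * w)) * (Real.exp (t * r))⁻¹ := by
    rw [← Real.exp_neg, ← Real.exp_add]; ring_nf
  have hE : (0:ℝ) < Real.exp (t * r) := Real.exp_pos _
  have hdiag : (Matrix.diagonal ![Real.exp (t*(-w+r)), Real.exp (t*(-w-r))] : Matrix (Fin 2) (Fin 2) ℝ)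
      = Matrix.of ![![Real.exp (t*(-w+r)), 0], ![0, Real.exp (t*(-w-r))]] := by
    ext i j; fin_cases i <;> fin_cases j <;> simp [Matrix.diagonal_apply]
  rw [hdiag]
  funext i
  fin_cases i <;>
    · simp [hP, Matrix.mulVec, Matrix.mul_apply, Fin.sum_univ_two,
        Matrix.of_apply, Matrix.smul_apply, dotProduct,
        Real.sinh_eq, Real.cosh_eq, he1, he2, Real.exp_neg]
      field_simp
      ring_nf
      all_goals linear_combination (Real.exp (r * t) ^ 2 - 1) * hr2
end
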